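/- Let D be a perfect field of characteristic 2 (i.e., every element of D is a square), and suppose f, g : D → D are additive maps satisfying f(x) + x^2 * g(x⁻¹) = 0 for all nonzero x ∈ D. Then there exists a fixed element q ∈ D such that f(x) = x*q and g(x) = -(x*q) for all x ∈ D. -/

import Mathlib

theorem stmt6 (D : Type*) [Field D] (hchar : ringChar D = 2)
    (hperf : ∀ x : D, ∃ r : D, r ^ 2 = x)
    (f g : D → D)
    (hf : ∀ x y : D, f (x + y) = f x + f y)
    (hg : ∀ x y : D, g (x + y) = g x + g y)
    (hid : ∀ x : D, x ≠ 0 → f x + x ^ 2 * g x⁻¹ = 0) :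
    ∃ q : D, (∀ x : D, f x = x * q) ∧ (∀ x : D, g x = -(x * q)) := by
  haveI : CharP D 2 := hchar ▸ ringChar.charP D
  have h2 : (2 : D) = 0 := CharP.cast_eq_zero D 2
  have hneg : ∀ a : D, -a = a := CharTwo.neg_eq
  have hadd : ∀ a : D, a + a = 0 := CharTwo.add_self_eq_zero
  have f0 : f 0 = 0 := by
    have := hf 0 0; simp at this; linear_combination this
  have g0 : g 0 = 0 := by
    have := hg 0 0; simp at this; linear_combination this
  -- key: x^2 * g x⁻¹ = f x for x ≠ 0
  have key : ∀ x : D, x ≠ 0 → x ^ 2 * g x⁻¹ = f x := by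
    intro x hx
    have := hid x hx
    linear_combination this - f x * h2
  have main : ∀ x : D, x ≠ 0 → x ≠ 1 → f (x ^ 2) = x ^ 2 * f 1 := by
    intro x hx hx1
    have hx1' : x + 1 ≠ 0 := by
      intro h
      apply hx1
      linear_combination h - h2
    have hprod : x * (x + 1) ≠ 0 := mul_ne_zero hx hx1'
    have hinv : (x * (x + 1))⁻¹ = x⁻¹ + (x + 1)⁻¹ := by
      field_simp
      ring_nf
      linear_combination -x * h2
    have e1 := key x hx
    have e2 := key (x + 1) hx1'
    have e3 := key (x * (x + 1)) hprod
    rw [hinv, hg] at e3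
    have e4 : f (x * (x + 1)) = f (x ^ 2) + f x := by
      have : x * (x + 1) = x ^ 2 + x := by ring
      rw [this, hf]
    have e5 : f (x + 1) = f x + f 1 := hf x 1
    rw [e5] at e2
    rw [e4] at e3
    -- e3 : (x*(x+1))^2 * (g x⁻¹ + g (x+1)⁻¹) = f (x^2) + f x
    have expand : (x * (x + 1)) ^ 2 * (g x⁻¹ + g (x + 1)⁻¹)
        = (x + 1) ^ 2 * (x ^ 2 * g x⁻¹) + x ^ 2 * ((x + 1) ^ 2 * g (x + 1)⁻¹) := by
      ring
    rw [expand, e1, e2] at e3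
    -- e3 : (x+1)^2 * f x + x^2 * (f x + f 1) = f (x^2) + f x
    -- (x+1)^2 + x^2 = 2x^2 + 2x + 1 = 1
    linear_combination -e3 + (x ^ 2 + x) * h2 * f x
  refine ⟨f 1, ?_, ?_⟩
  · intro y
    obtain ⟨r, hr⟩ := hperf y
    rcases eq_or_ne r 0 with h0 | h0
    · subst h0; simp at hr; rw [← hr, f0]; ring
    rcases eq_or_ne r 1 with h1 | h1
    · subst h1; simp at hr; rw [← hr]; ring
    · rw [← hr, main r h0 h1]
  · intro x
    rcases eq_or_ne x 0 with h0 | h0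
    · subst h0; simp [g0]
    · have hinv : x⁻¹ ≠ 0 := inv_ne_zero h0
      have := key x⁻¹ hinv
      rw [inv_inv] at this
      -- this : (x⁻¹)^2 * g x = f x⁻¹
      have hfx : f x⁻¹ = x⁻¹ * f 1 := by
        obtain ⟨r, hr⟩ := hperf x⁻¹
        rcases eq_or_ne r 0 with hh | hh
        · exfalso; apply hinv; rw [← hr, hh]; ring
        rcases eq_or_ne r 1 with hh1 | hh1
        · subst hh1; simp at hr; subst hr; simp
        · rw [← hr, main r hh hh1]
      rw [hfx] at this
      have : g x = x ^ 2 * (x⁻¹ * f 1) := by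
        field_simp at this ⊢
        linear_combination this
      rw [this, hneg]
      field_simp
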